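/- If (x_0, ν_0, η_0) is an invariant state of the fluid equations with arrival rate λ ∈ (0,∞), and p = ∫_0^{(x_0-1)^+} h^r((F^{λη*})^{-1}(y)) dy, then ν_0(dx) = (λ - p)(1-G^s(x))dx, and moreover λ - p = λ ∧ 1, so ν_0 = (λ∧1)ν*. -/

import Mathlib

open Set MeasureTheory Filter
open scoped NNReal ENNReal

/-- If `(x₀, ν₀, η₀)` is an invariant state of the fluid equations with arrival rate
`λ ∈ (0,∞)` and `p = ∫_0^{(x₀-1)^+} h^r((F^{λη*})^{-1}(y)) dy` is the stationary reneging
rate, then `ν₀(dx) = (λ - p)(1 - G^s(x)) dx`, and moreover `λ - p = λ ∧ 1`, so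
`ν₀ = (λ ∧ 1) ν*`.  The invariance of `ν₀` is encoded by the identity
`∫ f dν₀ = ∫ f(x+t) (1-G^s(x+t))/(1-G^s(x)) ν₀(dx) + (λ-p) ∫_0^t f(s)(1-G^s(s)) ds`,
the non-idling condition by `1 - ⟨1,ν₀⟩ = (1-x₀)^+`, and `p = 0` whenever `x₀ ≤ 1`
(the integral defining `p` is over an empty range in that case). -/
theorem stmt11 (Gs : ℝ → ℝ) (lam p x0 : ℝ) (ν0 : Measure ℝ) [IsFiniteMeasure ν0]
    (hlam : 0 < lam) (hp : 0 ≤ p) (hx0 : 0 ≤ x0)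
    (hGcont : Continuous Gs) (hGmono : Monotone Gs)
    (hG0 : Gs 0 = 0) (hG1 : ∀ x, Gs x ≤ 1)
    (hmeanone : (∫ x in Ioi (0:ℝ), (1 - Gs x)) = 1)
    (hmean : IntegrableOn (fun x => 1 - Gs x) (Ioi 0))
    (hsupp0 : ν0 (Iio 0) = 0) (hsuppH : ν0 {x : ℝ | 1 ≤ Gs x} = 0)
    (hinv : ∀ f : ℝ → ℝ, Continuous f → (∃ M, ∀ x, |f x| ≤ M) → ∀ t : ℝ, 0 ≤ t →
      (∫ x, f x ∂ν0)
        = (∫ x, f (x + t) * ((1 - Gs (x + t)) / (1 - Gs x)) ∂ν0)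
          + (lam - p) * ∫ s in (0:ℝ)..t, f s * (1 - Gs s))
    (hnonidling : 1 - (ν0 univ).toReal = max (1 - x0) 0)
    (hpzero : x0 ≤ 1 → p = 0) :
    ν0 = (volume.restrict (Ioi 0)).withDensity
        (fun x => ENNReal.ofReal ((lam - p) * (1 - Gs x)))
      ∧ lam - p = min lam 1 := by
  -- Gs tends to 1 at infinity
  have hbdd : BddAbove (Set.range Gs) := ⟨1, by rintro _ ⟨x, rfl⟩; exact hG1 x⟩
  have hGtendL : Tendsto Gs atTop (nhds (⨆ x, Gs x)) := tendsto_atTop_ciSup hGmono hbdd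
  have hLeq : (⨆ x, Gs x) = 1 := by
    set L := ⨆ x, Gs x with hLdef
    have hL1 : L ≤ 1 := ciSup_le hG1
    by_contra h
    have hLlt : L < 1 := lt_of_le_of_ne hL1 h
    have hle : ∀ x, Gs x ≤ L := fun x => le_ciSup hbdd x
    have hconst : IntegrableOn (fun _ : ℝ => (1 - L)) (Ioi 0) := by
      apply Integrable.mono' hmean aestronglyMeasurable_const
      filter_upwards with x
      have h1 : Gs x ≤ L := hle x
      have : (0:ℝ) ≤ 1 - L := by linarith
      rw [Real.norm_eq_abs, abs_of_nonneg this]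
      linarith
    rw [integrableOn_const_iff] at hconst
    rcases hconst with h' | h'
    · simp at h'; linarith
    · rw [Real.volume_Ioi] at h'; exact (lt_irrefl _ h').elim
  have hGtop : Tendsto Gs atTop (nhds 1) := hLeq ▸ hGtendL
  -- a.e. properties of ν0
  have hae : ∀ᵐ x ∂ν0, 0 ≤ x ∧ Gs x < 1 := by
    have h1 : ∀ᵐ x ∂ν0, ¬ (x < 0) := by
      rw [ae_iff]; simpa [Set.Iio] using hsupp0
    have h2 : ∀ᵐ x ∂ν0, ¬ (1 ≤ Gs x) := by
      rw [ae_iff]; simpa using hsuppH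
    filter_upwards [h1, h2] with x hx1 hx2
    exact ⟨not_lt.mp hx1, not_le.mp hx2⟩
  -- integrability of bounded continuous f times (1 - Gs)
  have hIntMul : ∀ f : ℝ → ℝ, Continuous f → ∀ M : ℝ, (∀ x, |f x| ≤ M) →
      IntegrableOn (fun x => f x * (1 - Gs x)) (Ioi 0) := by
    intro f hf M hM
    apply Integrable.mono' (hmean.const_mul M)
      ((hf.mul (continuous_const.sub hGcont)).aestronglyMeasurable)
    filter_upwards with x
    have hg : (0:ℝ) ≤ 1 - Gs x := by linarith [hG1 x]
    rw [Real.norm_eq_abs]; change |f x * (1 - Gs x)| ≤ M * (1 - Gs x)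
    rw [abs_mul, abs_of_nonneg hg]
    exact mul_le_mul_of_nonneg_right (hM x) hg
  -- the key identity
  have key : ∀ f : ℝ → ℝ, Continuous f → ∀ M : ℝ, (∀ x, |f x| ≤ M) →
      (∫ x, f x ∂ν0) = (lam - p) * ∫ x in Ioi 0, f x * (1 - Gs x) := by
    intro f hf M hM
    have hM0 : 0 ≤ M := le_trans (abs_nonneg _) (hM 0)
    have hint := hIntMul f hf M hM
    have hB : Tendsto (fun t => ∫ s in (0:ℝ)..t, f s * (1 - Gs s)) atTop
        (nhds (∫ x in Ioi 0, f x * (1 - Gs x))) :=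
      intervalIntegral_tendsto_integral_Ioi 0 hint tendsto_id
    have hA : Tendsto (fun t => ∫ x, f (x + t) * ((1 - Gs (x + t)) / (1 - Gs x)) ∂ν0)
        atTop (nhds 0) := by
      have h0 : (0:ℝ) = ∫ x, (0:ℝ) ∂ν0 := by simp
      rw [h0]
      apply tendsto_integral_filter_of_dominated_convergence (bound := fun _ => M)
      · filter_upwards with t
        exact ((hf.comp (continuous_id.add continuous_const)).measurable.mul
          (((continuous_const.sub hGcont).measurable.comp
            (continuous_id.add continuous_const).measurable).div
            (continuous_const.sub hGcont).measurable)).aestronglyMeasurable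
      · filter_upwards [eventually_ge_atTop (0:ℝ)] with t ht
        filter_upwards [hae] with x hx
        obtain ⟨hx0', hxG⟩ := hx
        have hd : (0:ℝ) < 1 - Gs x := by linarith
        have hnum0 : (0:ℝ) ≤ 1 - Gs (x + t) := by linarith [hG1 (x + t)]
        have hnumle : 1 - Gs (x + t) ≤ 1 - Gs x := by
          have := hGmono (le_add_of_nonneg_right ht : x ≤ x + t); linarith
        have hr0 : (0:ℝ) ≤ (1 - Gs (x + t)) / (1 - Gs x) := div_nonneg hnum0 hd.le
        have hr1 : (1 - Gs (x + t)) / (1 - Gs x) ≤ 1 := (div_le_one hd).mpr hnumle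
        rw [Real.norm_eq_abs, abs_mul, abs_of_nonneg hr0]
        calc |f (x + t)| * ((1 - Gs (x + t)) / (1 - Gs x))
            ≤ M * 1 := mul_le_mul (hM _) hr1 hr0 hM0
          _ = M := mul_one M
      · exact integrable_const M
      · filter_upwards [hae] with x hx
        obtain ⟨hx0', hxG⟩ := hx
        have hd : (0:ℝ) < 1 - Gs x := by linarith
        have hcomp : Tendsto (fun t => Gs (x + t)) atTop (nhds 1) :=
          hGtop.comp (tendsto_atTop_add_const_left atTop x tendsto_id)
        have hnum : Tendsto (fun t => 1 - Gs (x + t)) atTop (nhds 0) := by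
          have := tendsto_const_nhds (x := (1:ℝ)) (f := atTop) |>.sub hcomp
          simpa using this
        have hg : Tendsto (fun t => M * ((1 - Gs (x + t)) / (1 - Gs x))) atTop (nhds 0) := by
          have := (hnum.div_const (1 - Gs x)).const_mul M
          simpa using this
        apply squeeze_zero_norm' _ hg
        filter_upwards [eventually_ge_atTop (0:ℝ)] with t ht
        have hnum0 : (0:ℝ) ≤ 1 - Gs (x + t) := by linarith [hG1 (x + t)]
        have hr0 : (0:ℝ) ≤ (1 - Gs (x + t)) / (1 - Gs x) := div_nonneg hnum0 hd.le
        rw [Real.norm_eq_abs, abs_mul, abs_of_nonneg hr0]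
        exact mul_le_mul_of_nonneg_right (hM _) hr0
    have heq : (fun _ : ℝ => ∫ x, f x ∂ν0) =ᶠ[atTop]
        (fun t => (∫ x, f (x + t) * ((1 - Gs (x + t)) / (1 - Gs x)) ∂ν0)
          + (lam - p) * ∫ s in (0:ℝ)..t, f s * (1 - Gs s)) := by
      filter_upwards [eventually_ge_atTop (0:ℝ)] with t ht
      exact hinv f hf ⟨M, hM⟩ t ht
    have hlim : Tendsto (fun t => (∫ x, f (x + t) * ((1 - Gs (x + t)) / (1 - Gs x)) ∂ν0)
          + (lam - p) * ∫ s in (0:ℝ)..t, f s * (1 - Gs s)) atTop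
        (nhds (0 + (lam - p) * ∫ x in Ioi 0, f x * (1 - Gs x))) :=
      hA.add (hB.const_mul _)
    have := tendsto_nhds_unique (tendsto_const_nhds.congr' heq) hlim
    linarith [this]
  -- total mass
  have hmass : (ν0 univ).toReal = lam - p := by
    have h1 := key (fun _ => (1:ℝ)) continuous_const 1 (fun x => by norm_num)
    simp only [one_mul] at h1
    rw [hmeanone] at h1
    have h2 : ν0.real univ = lam - p := by simpa using h1
    exact h2
  have hc0 : 0 ≤ lam - p := hmass ▸ ENNReal.toReal_nonneg
  -- lam - p = min lam 1
  have hc : lam - p = min lam 1 := by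
    rw [hmass] at hnonidling
    rcases le_or_gt x0 1 with h | h
    · have hp0 : p = 0 := hpzero h
      have hmax : max (1 - x0) 0 = 1 - x0 := max_eq_left (by linarith)
      rw [hmax] at hnonidling
      have hlx : lam = x0 := by linarith
      rw [hp0, min_eq_left (by linarith)]
      ring
    · have hmax : max (1 - x0) 0 = 0 := max_eq_right (by linarith)
      rw [hmax] at hnonidling
      have h1 : lam - p = 1 := by linarith
      rw [h1, min_eq_right (by linarith)]
  refine ⟨?_, hc⟩
  -- measure equality
  apply ext_of_forall_lintegral_eq_of_IsFiniteMeasure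
  intro f
  obtain ⟨C, hC⟩ := f.bounded
  have hg_cont : Continuous (fun x => ((f x : ℝ≥0) : ℝ)) :=
    NNReal.continuous_coe.comp f.continuous
  have hg0 : ∀ x : ℝ, (0:ℝ) ≤ ((f x : ℝ≥0) : ℝ) := fun x => (f x).coe_nonneg
  have hgbd : ∀ x : ℝ, |((f x : ℝ≥0) : ℝ)| ≤ ((f 0 : ℝ≥0) : ℝ) + C := by
    intro x
    have h1 := hC x 0
    rw [NNReal.dist_eq] at h1
    rw [abs_of_nonneg (hg0 x)]
    have h2 := abs_sub_abs_le_abs_sub ((f x : ℝ≥0) : ℝ) ((f 0 : ℝ≥0) : ℝ)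
    rw [abs_of_nonneg (hg0 x), abs_of_nonneg (hg0 0)] at h2
    linarith
  have hgint : Integrable (fun x => ((f x : ℝ≥0) : ℝ)) ν0 := by
    apply Integrable.mono' (integrable_const (((f 0 : ℝ≥0) : ℝ) + C))
      hg_cont.aestronglyMeasurable
    filter_upwards with x
    rw [Real.norm_eq_abs]; exact hgbd x
  have hkey := key (fun x => ((f x : ℝ≥0) : ℝ)) hg_cont (((f 0 : ℝ≥0) : ℝ) + C) hgbd
  have hLHS : ∫⁻ x, (f x : ℝ≥0∞) ∂ν0 = ENNReal.ofReal (∫ x, ((f x : ℝ≥0) : ℝ) ∂ν0) :=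
    lintegral_coe_eq_integral (fun x => f x) hgint
  have hintg : IntegrableOn (fun x => ((f x : ℝ≥0) : ℝ) * (1 - Gs x)) (Ioi 0) :=
    hIntMul _ hg_cont (((f 0 : ℝ≥0) : ℝ) + C) hgbd
  have hRHS : ∫⁻ x, (f x : ℝ≥0∞)
      ∂((volume.restrict (Ioi 0)).withDensity
        (fun x => ENNReal.ofReal ((lam - p) * (1 - Gs x))))
      = ∫⁻ x in Ioi 0, ENNReal.ofReal ((lam - p) * (1 - Gs x)) * (f x : ℝ≥0∞) := by
    rw [lintegral_withDensity_eq_lintegral_mul _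
      (show Measurable (fun x => ENNReal.ofReal ((lam - p) * (1 - Gs x))) from
        (continuous_const.mul (continuous_const.sub hGcont)).measurable.ennreal_ofReal)
      (f.continuous.measurable.coe_nnreal_ennreal)]
    rfl
  rw [hLHS, hRHS, hkey]
  rw [← integral_const_mul]
  rw [ofReal_integral_eq_lintegral_ofReal (hintg.const_mul _)
    (Filter.Eventually.of_forall fun x => by
      have := hg0 x
      have h1 : (0:ℝ) ≤ 1 - Gs x := by linarith [hG1 x]
      positivity)]
  apply lintegral_congr
  intro x
  have h1 : (0:ℝ) ≤ 1 - Gs x := by linarith [hG1 x]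
  have heq1 : (lam - p) * (((f x : ℝ≥0) : ℝ) * (1 - Gs x)) = ((lam - p) * (1 - Gs x)) * ((f x : ℝ≥0) : ℝ) := by ring
  rw [heq1, ENNReal.ofReal_mul (by positivity)]
  rw [ENNReal.ofReal_coe_nnreal]
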